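/- Let B be an (n×1) complex column vector. Then the matrix exponential of the (n+1)×(n+1) skew-Hermitian block matrix [[0, B], [-B†, 0]] equals the block matrix [[cos√(BB†), (sin√(B†B)/√(B†B))·B], [-(sin√(B†B)/√(B†B))·B†, cos√(B†B)]], where B†B is the scalar ‖B‖², √(BB†) is taken via the functional calculus on the positive semidefinite matrix BB†, and sin(x)/x is interpreted as 1 at x = 0. -/

import Mathlib

open Matrix Complex

/-- `cos √M` defined by the entire power series `∑ (-1)^k M^k / (2k)!`,
which agrees with the functional-calculus `cos` of the PSD square root of `M`. -/
noncomputable def cosSqrt {m : Type*} [Fintype m] [DecidableEq m]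
    (M : Matrix m m ℂ) : Matrix m m ℂ :=
  ∑' k : ℕ, ((-1 : ℂ) ^ k / (2 * k).factorial) • M ^ k

/-- `sin x / x`, interpreted as `1` at `x = 0`. -/
noncomputable def sinc (x : ℝ) : ℝ := if x = 0 then 1 else Real.sin x / x

attribute [local instance] Matrix.linftyOpNormedAddCommGroup Matrix.linftyOpNormedRing
  Matrix.linftyOpNormedAlgebra

section helpers

variable {m p q : Type*} [Fintype m] [Fintype p] [Fintype q] [DecidableEq m] [DecidableEq q]

lemma fromBlocks_diag_pow (P : Matrix m m ℂ) (Q : Matrix q q ℂ) (k : ℕ) :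
    (fromBlocks P 0 0 Q) ^ k = fromBlocks (P ^ k) 0 0 (Q ^ k) := by
  induction k with
  | zero => simp [fromBlocks_one]
  | succ k ih =>
      rw [pow_succ, pow_succ, pow_succ, ih, fromBlocks_multiply]
      simp

lemma tsum_matrix_apply {a b : Type*} (F : ℕ → Matrix a b ℂ) (hs : Summable F) (x : a) (y : b) :
    (∑' k, F k) x y = ∑' k, F k x y := by
  rw [show (∑' k, F k) x = ∑' k, F k x from tsum_apply hs, tsum_apply ((Pi.summable).mp hs x)]

lemma tsum_fromBlocks (f : ℕ → Matrix m m ℂ) (g : ℕ → Matrix m q ℂ)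
    (h : ℕ → Matrix q m ℂ) (i : ℕ → Matrix q q ℂ)
    (hs : Summable fun k => fromBlocks (f k) (g k) (h k) (i k)) :
    ∑' k, fromBlocks (f k) (g k) (h k) (i k)
      = fromBlocks (∑' k, f k) (∑' k, g k) (∑' k, h k) (∑' k, i k) := by
  have hf : Summable f := by
    refine Pi.summable.mpr fun x => Pi.summable.mpr fun y => ?_
    simpa using (Pi.summable.mp (Pi.summable.mp hs (Sum.inl x)) (Sum.inl y))
  have hg : Summable g := by
    refine Pi.summable.mpr fun x => Pi.summable.mpr fun y => ?_
    simpa using (Pi.summable.mp (Pi.summable.mp hs (Sum.inl x)) (Sum.inr y))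
  have hh : Summable h := by
    refine Pi.summable.mpr fun x => Pi.summable.mpr fun y => ?_
    simpa using (Pi.summable.mp (Pi.summable.mp hs (Sum.inr x)) (Sum.inl y))
  have hi : Summable i := by
    refine Pi.summable.mpr fun x => Pi.summable.mpr fun y => ?_
    simpa using (Pi.summable.mp (Pi.summable.mp hs (Sum.inr x)) (Sum.inr y))
  ext x y
  cases x <;> cases y <;>
    simp only [tsum_matrix_apply _ hs, fromBlocks_apply₁₁, fromBlocks_apply₁₂,
      fromBlocks_apply₂₁, fromBlocks_apply₂₂] <;>
    [rw [tsum_matrix_apply _ hf]; rw [tsum_matrix_apply _ hg];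
     rw [tsum_matrix_apply _ hh]; rw [tsum_matrix_apply _ hi]]

end helpers


set_option maxHeartbeats 2000000

/-- The matrix exponential of the skew-Hermitian block matrix `[[0, B], [-B†, 0]]`,
for a column vector `B` with `b = √(B†B) = ‖B‖`, equals
`[[cos √(BB†), (sin b / b)·B], [-(sin b / b)·B†, cos b]]`. -/
theorem exp_skew_block (n : ℕ) (B : Matrix (Fin n) (Fin 1) ℂ)
    (b : ℝ) (hb : b = Real.sqrt (((Bᴴ * B) 0 0).re)) :
    NormedSpace.exp (Matrix.fromBlocks 0 B (-Bᴴ) 0) =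
      Matrix.fromBlocks (cosSqrt (B * Bᴴ)) ((sinc b : ℂ) • B)
        (-((sinc b : ℂ) • Bᴴ)) ((Real.cos b : ℂ) • 1) := by
  set β : ℂ := ((b : ℝ) : ℂ) with hβdef
  set A : Matrix (Fin n ⊕ Fin 1) (Fin n ⊕ Fin 1) ℂ := fromBlocks 0 B (-Bᴴ) 0 with hA
  set M : Matrix (Fin n) (Fin n) ℂ := B * Bᴴ with hM
  -- the 1×1 matrix BᴴB is the scalar b²
  have hentry : (Bᴴ * B) 0 0 = ((∑ i, Complex.normSq (B i 0) : ℝ) : ℂ) := by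
    simp [Matrix.mul_apply, Matrix.conjTranspose_apply, Complex.normSq_eq_conj_mul_self]
  have hb2 : β ^ 2 = (Bᴴ * B) 0 0 := by
    have hnn : (0:ℝ) ≤ ∑ i, Complex.normSq (B i 0) :=
      Finset.sum_nonneg fun i _ => Complex.normSq_nonneg _
    have hre : ((Bᴴ * B) 0 0).re = ∑ i, Complex.normSq (B i 0) := by
      rw [hentry, Complex.ofReal_re]
    rw [hβdef, hb, hre, hentry]
    norm_cast
    exact Real.sq_sqrt hnn
  have h1 : Bᴴ * B = (β ^ 2) • (1 : Matrix (Fin 1) (Fin 1) ℂ) := by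
    ext i j
    have hi : i = 0 := Subsingleton.elim _ _
    have hj : j = 0 := Subsingleton.elim _ _
    subst hi; subst hj
    simp [← hb2, Matrix.one_apply]
  have h2 : M * B = (β ^ 2) • B := by
    rw [hM, Matrix.mul_assoc, h1, Matrix.mul_smul, Matrix.mul_one]
  have h2' : ∀ k : ℕ, (-M) ^ k * B = (-β ^ 2) ^ k • B := by
    intro k
    induction k with
    | zero => simp
    | succ k ih =>
        rw [pow_succ, Matrix.mul_assoc, Matrix.neg_mul, h2, ← neg_smul, Matrix.mul_smul, ih,
          smul_smul, ← pow_succ']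
  have hA2 : A ^ 2 = fromBlocks (-M) 0 0 ((-β ^ 2) • 1) := by
    rw [hA, pow_two, fromBlocks_multiply]
    simp [h1, Matrix.mul_neg, hM]
  have heven : ∀ k : ℕ, A ^ (2 * k) = fromBlocks ((-M) ^ k) 0 0 ((-β ^ 2) ^ k • 1) := by
    intro k
    rw [pow_mul, hA2, fromBlocks_diag_pow, smul_pow, one_pow]
  have hodd : ∀ k : ℕ, A ^ (2 * k + 1)
      = fromBlocks 0 ((-β ^ 2) ^ k • B) ((-β ^ 2) ^ k • (-Bᴴ)) 0 := by
    intro k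
    rw [pow_succ, heven k, hA, fromBlocks_multiply]
    simp only [Matrix.mul_zero, Matrix.zero_mul, add_zero, zero_add, h2',
      Matrix.smul_mul, Matrix.one_mul]
  -- scalar series
  have hC : HasSum (fun k : ℕ => (-1:ℂ) ^ k * β ^ (2*k) / ((2*k).factorial))
      ((Real.cos b : ℂ)) := by
    rw [hβdef, Complex.ofReal_cos]
    exact Complex.hasSum_cos _
  have hS : HasSum (fun k : ℕ => (-1:ℂ) ^ k * β ^ (2*k) / ((2*k+1).factorial))
      ((sinc b : ℂ)) := by
    rcases eq_or_ne b 0 with h0 | h0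
    · have hz : ∀ (k : ℕ), k ≠ 0 →
          (-1:ℂ) ^ k * β ^ (2*k) / ((2*k+1).factorial) = 0 := by
        intro k hk
        rw [hβdef, h0]
        simp [zero_pow (by omega : 2*k ≠ 0)]
      have h00 := hasSum_single
        (f := fun k : ℕ => (-1:ℂ) ^ k * β ^ (2*k) / ((2*k+1).factorial)) 0 hz
      simpa [sinc, h0, hβdef] using h00
    · have hβ0 : β ≠ 0 := by simp [hβdef, h0]
      have hdiv := (Complex.hasSum_sin β).div_const β
      have heq : ∀ k : ℕ, (-1:ℂ) ^ k * β ^ (2*k+1) / ((2*k+1).factorial) / β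
          = (-1:ℂ) ^ k * β ^ (2*k) / ((2*k+1).factorial) := by
        intro k
        have hg : ((-1:ℂ) ^ k * β ^ (2*k+1) / ((2*k+1).factorial) / β)
            = ((-1:ℂ) ^ k * β ^ (2*k) * (β / β)) / ((2*k+1).factorial) := by
          ring
        rw [hg, div_self hβ0, mul_one]
      simp_rw [heq] at hdiv
      convert hdiv using 1
      · rfl
      simp only [sinc, if_neg h0, hβdef, Complex.ofReal_div, Complex.ofReal_sin]
  -- summability of the exponential series and its even/odd parts
  have hsum : Summable (fun k : ℕ => ((k.factorial:ℂ))⁻¹ • A ^ k) :=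
    NormedSpace.expSeries_summable' A
  have he' : Summable (fun k : ℕ => (((2*k).factorial:ℂ))⁻¹ • A ^ (2*k)) :=
    hsum.comp_injective (fun a b h => by omega)
  have ho' : Summable (fun k : ℕ => (((2*k+1).factorial:ℂ))⁻¹ • A ^ (2*k+1)) :=
    hsum.comp_injective (fun a b h => by omega)
  -- rewrite the even terms blockwise
  have heF : (fun k : ℕ => (((2*k).factorial:ℂ))⁻¹ • A ^ (2*k))
      = fun k : ℕ => fromBlocks (((-1:ℂ) ^ k / ((2*k).factorial)) • M ^ k) 0 0
          (((-1:ℂ) ^ k * β ^ (2*k) / ((2*k).factorial)) • 1) := by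
    funext k
    rw [heven k, fromBlocks_smul]
    simp only [smul_zero]
    have e1 : (((2*k).factorial:ℂ))⁻¹ • (-M) ^ k
        = ((-1:ℂ) ^ k / ((2*k).factorial)) • M ^ k := by
      rw [← neg_one_smul ℂ M, smul_pow, smul_smul, inv_mul_eq_div]
    have e2 : (((2*k).factorial:ℂ))⁻¹ • ((-β ^ 2) ^ k • (1 : Matrix (Fin 1) (Fin 1) ℂ))
        = ((-1:ℂ) ^ k * β ^ (2*k) / ((2*k).factorial)) • 1 := by
      rw [smul_smul, inv_mul_eq_div, neg_pow, pow_mul]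
    rw [e1, e2]
  have hoF : (fun k : ℕ => (((2*k+1).factorial:ℂ))⁻¹ • A ^ (2*k+1))
      = fun k : ℕ => fromBlocks 0
          (((-1:ℂ) ^ k * β ^ (2*k) / ((2*k+1).factorial)) • B)
          (((-1:ℂ) ^ k * β ^ (2*k) / ((2*k+1).factorial)) • (-Bᴴ)) 0 := by
    funext k
    rw [hodd k, fromBlocks_smul]
    simp only [smul_zero]
    have e1 : (((2*k+1).factorial:ℂ))⁻¹ • ((-β ^ 2) ^ k • B)
        = ((-1:ℂ) ^ k * β ^ (2*k) / ((2*k+1).factorial)) • B := by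
      rw [smul_smul, inv_mul_eq_div, neg_pow, pow_mul]
    have e2 : (((2*k+1).factorial:ℂ))⁻¹ • ((-β ^ 2) ^ k • (-Bᴴ))
        = ((-1:ℂ) ^ k * β ^ (2*k) / ((2*k+1).factorial)) • (-Bᴴ) := by
      rw [smul_smul, inv_mul_eq_div, neg_pow, pow_mul]
    rw [e1, e2]
  have heT : (∑' k : ℕ, (((2*k).factorial:ℂ))⁻¹ • A ^ (2*k))
      = fromBlocks (cosSqrt M) 0 0 ((Real.cos b : ℂ) • 1) := by
    rw [heF, tsum_fromBlocks _ _ _ _ (heF ▸ he'), (hC.smul_const _).tsum_eq]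
    simp only [tsum_zero]
    rfl
  have hoT : (∑' k : ℕ, (((2*k+1).factorial:ℂ))⁻¹ • A ^ (2*k+1))
      = fromBlocks 0 ((sinc b : ℂ) • B) (-((sinc b : ℂ) • Bᴴ)) 0 := by
    rw [hoF, tsum_fromBlocks _ _ _ _ (hoF ▸ ho'), (hS.smul_const B).tsum_eq,
      (hS.smul_const (-Bᴴ)).tsum_eq, smul_neg]
    simp only [tsum_zero]
  calc NormedSpace.exp A = ∑' k : ℕ, ((k.factorial:ℂ))⁻¹ • A ^ k := by
        rw [NormedSpace.exp_eq_tsum (𝕂 := ℂ)]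
    _ = (∑' k : ℕ, (((2*k).factorial:ℂ))⁻¹ • A ^ (2*k))
        + (∑' k : ℕ, (((2*k+1).factorial:ℂ))⁻¹ • A ^ (2*k+1)) :=
        (tsum_even_add_odd he' ho').symm
    _ = fromBlocks (cosSqrt M) ((sinc b : ℂ) • B) (-((sinc b : ℂ) • Bᴴ))
        ((Real.cos b : ℂ) • 1) := by
        rw [heT, hoT, fromBlocks_add]
        simp
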